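/- arXiv:1209.5750 — 3 statements merged into one kernel-verified Lean document; each statement's English description precedes it below -/
import Mathlib

section
/- Suppose ψ is a unit vector in a bipartite space H_A ⊗ H_B (with dim H_B = D) such that P (U_B ψ) = 0 for every unitary U_B acting on the B factor, where P is a fixed operator on H_A ⊗ H_B. Then P · (Tr_B[|ψ⟩⟨ψ|] ⊗ I_B / D) = 0. -/
open Kronecker

/-- Partial trace over the second tensor factor. -/
noncomputable def ptraceB {A B : Type*} [Fintype B] (M : Matrix (A × B) (A × B) ℂ) : Matrix A A ℂ :=
  fun a a' => ∑ b, M (a, b) (a', b)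

/-- If P annihilates (I ⊗ U)ψ for every unitary U on the B factor, then
P · (Tr_B[|ψ⟩⟨ψ|] ⊗ I/D) = 0. -/
theorem stmt_6 {A B : Type*} [Fintype A] [Fintype B] [DecidableEq A] [DecidableEq B]
    (D : ℕ) (hD : Fintype.card B = D) (hD0 : 0 < D)
    (ψ : A × B → ℂ) (hψ : ∑ p, Complex.normSq (ψ p) = 1)
    (P : Matrix (A × B) (A × B) ℂ)
    (h : ∀ U : Matrix.unitaryGroup B ℂ,
      P.mulVec (((1 : Matrix A A ℂ) ⊗ₖ (U : Matrix B B ℂ)).mulVec ψ) = 0) :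
    P * (ptraceB (Matrix.vecMulVec ψ (star ψ)) ⊗ₖ ((D : ℂ)⁻¹ • (1 : Matrix B B ℂ))) = 0 := by
  classical
  -- sign functions
  set s : (B → Bool) → B → ℂ := fun f x => if f x then 1 else -1 with hs_def
  have hs_self : ∀ f x, s f x * s f x = 1 := by
    intro f x; simp only [hs_def]; split <;> norm_num
  have hs_star : ∀ f x, (starRingEnd ℂ) (s f x) = s f x := by
    intro f x; simp only [hs_def]; split <;> simp
  -- orthogonality of sign vectors
  have hsum : ∀ x y : B, (∑ f : B → Bool, s f x * s f y)
      = if x = y then ((2 : ℂ) ^ D) else 0 := by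
    intro x y
    by_cases hxy : x = y
    · subst hxy
      rw [Finset.sum_congr rfl (fun f _ => hs_self f x)]
      simp [Finset.card_univ, Fintype.card_fun, hD]
    · simp only [if_neg hxy]
      set g : (B → Bool) → ℂ := fun f => s f x * s f y with hg
      have hinv : Function.Involutive (fun f : B → Bool => Function.update f x (!f x)) := by
        intro f
        funext z
        by_cases hz : z = x
        · subst hz; simp
        · simp [Function.update_of_ne hz]
      have hflip : ∀ f, g ((fun f : B → Bool => Function.update f x (!f x)) f) = -(g f) := by
        intro f
        simp only [hg, hs_def]
        rw [Function.update_self, Function.update_of_ne (Ne.symm hxy)]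
        cases hfx : f x <;> cases hfy : f y <;> simp
      have hcomp := Equiv.sum_comp (hinv.toPerm _) g
      have hthis : (∑ f : B → Bool, g f) = -(∑ f : B → Bool, g f) := by
        calc (∑ f : B → Bool, g f) = ∑ f : B → Bool, g ((hinv.toPerm _) f) := hcomp.symm
        _ = ∑ f : B → Bool, -(g f) := Finset.sum_congr rfl fun f _ => hflip f
        _ = -(∑ f : B → Bool, g f) := by rw [Finset.sum_neg_distrib]
      linear_combination hthis / 2
  -- the key vanishing identity
  have key : ∀ (b' c : B) (p : A × B), (∑ a, P p (a, b') * ψ (a, c)) = 0 := by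
    intro b' c p
    set σ := Equiv.swap b' c with hσ
    set U : (B → Bool) → Matrix B B ℂ := fun f x y => if x = σ y then s f x else 0 with hU
    have hUmem : ∀ f, U f ∈ Matrix.unitaryGroup B ℂ := by
      intro f
      rw [Matrix.mem_unitaryGroup_iff]
      ext x y
      simp only [Matrix.mul_apply, Matrix.star_apply, Matrix.one_apply]
      simp only [hU]
      rw [Finset.sum_eq_single (σ x)]
      · by_cases hxy : x = y
        · subst hxy
          simp [hσ, Equiv.swap_apply_self, hs_star, hs_self]
        · have hny : ¬ (y = σ (σ x)) := by
            simp only [hσ, Equiv.swap_apply_self]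
            exact fun hh => hxy hh.symm
          simp only [hσ, Equiv.swap_apply_self] at hny ⊢
          simp [hny, hxy]
      · intro z _ hz
        have hnx : ¬ (x = σ z) := by
          intro hx
          exact hz (by simp [hx, hσ, Equiv.swap_apply_self])
        simp [hnx]
      · simp
    -- P annihilates (1 ⊗ U f) ψ, entrywise
    have h0 : ∀ f, (∑ x : A × B, P p x * (s f x.2 * ψ (x.1, σ x.2))) = 0 := by
      intro f
      have hf := congrFun (h ⟨U f, hUmem f⟩) p
      simp only [Matrix.mulVec, dotProduct, Pi.zero_apply] at hf
      rw [← hf]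
      refine Finset.sum_congr rfl fun x _ => ?_
      congr 1
      rw [Fintype.sum_prod_type]
      have hstep : ∀ a2 : A, (∑ b2 : B, ((1 : Matrix A A ℂ) ⊗ₖ U f) x (a2, b2) * ψ (a2, b2))
          = if x.1 = a2 then (∑ b2 : B, U f x.2 b2 * ψ (a2, b2)) else 0 := by
        intro a2
        by_cases ha : x.1 = a2
        · rw [if_pos ha]
          refine Finset.sum_congr rfl fun b2 _ => ?_
          have hk : ((1 : Matrix A A ℂ) ⊗ₖ U f) x (a2, b2) = U f x.2 b2 := by
            rcases x with ⟨x1, x2⟩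
            rw [Matrix.kroneckerMap_apply]; simp_all [Matrix.one_apply]
          rw [hk]
        · rw [if_neg ha]
          refine Finset.sum_eq_zero fun b2 _ => ?_
          rcases x with ⟨x1, x2⟩
          rw [Matrix.kroneckerMap_apply]; simp_all [Matrix.one_apply]
      rw [Finset.sum_congr rfl fun a2 _ => hstep a2, Finset.sum_ite_eq]
      simp only [Finset.mem_univ, if_pos]
      rw [Finset.sum_eq_single (σ x.2)]
      · simp [hU, hσ, Equiv.swap_apply_self]
      · intro b2 _ hb2
        have : ¬ (x.2 = σ b2) := by
          intro hh
          exact hb2 (by simp [hh, hσ, Equiv.swap_apply_self])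
        simp [hU, this]
      · simp
    -- multiply by s f b' and sum over f
    have h1 : (∑ x : A × B, (∑ f : B → Bool, s f b' * s f x.2) * (P p x * ψ (x.1, σ x.2))) = 0 := by
      have swap := Finset.sum_comm (s := (Finset.univ : Finset (A × B)))
        (t := (Finset.univ : Finset (B → Bool)))
        (f := fun x f => (s f b' * s f x.2) * (P p x * ψ (x.1, σ x.2)))
      calc (∑ x : A × B, (∑ f : B → Bool, s f b' * s f x.2) * (P p x * ψ (x.1, σ x.2)))
          = ∑ x : A × B, ∑ f : B → Bool, (s f b' * s f x.2) * (P p x * ψ (x.1, σ x.2)) := by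
            refine Finset.sum_congr rfl fun x _ => ?_
            rw [Finset.sum_mul]
        _ = ∑ f : B → Bool, ∑ x : A × B, (s f b' * s f x.2) * (P p x * ψ (x.1, σ x.2)) := swap
        _ = ∑ f : B → Bool, s f b' * ∑ x : A × B, P p x * (s f x.2 * ψ (x.1, σ x.2)) := by
            refine Finset.sum_congr rfl fun f _ => ?_
            rw [Finset.mul_sum]
            refine Finset.sum_congr rfl fun x _ => ?_
            ring
        _ = 0 := by simp [h0]
    -- simplify using hsum
    rw [Finset.sum_congr rfl (fun x (_ : x ∈ Finset.univ) => by rw [hsum b' x.2])] at h1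
    rw [Fintype.sum_prod_type] at h1
    have h2 : (∑ a : A, ∑ b : B,
        (if b' = b then ((2:ℂ)^D) else 0) * (P p (a, b) * ψ (a, σ b))) =
        ∑ a : A, ((2:ℂ)^D) * (P p (a, b') * ψ (a, σ b')) := by
      refine Finset.sum_congr rfl fun a _ => ?_
      rw [Finset.sum_eq_single b']
      · simp
      · intro b _ hb; simp [Ne.symm hb]
      · simp
    rw [h2] at h1
    rw [← Finset.mul_sum] at h1
    have h3 : (∑ a : A, P p (a, b') * ψ (a, σ b')) = 0 := by
      rcases mul_eq_zero.mp h1 with h4 | h4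
      · exact absurd h4 (pow_ne_zero _ two_ne_zero)
      · exact h4
    simpa [hσ, Equiv.swap_apply_left] using h3
  -- final assembly
  ext p q
  simp only [Matrix.mul_apply, Matrix.kroneckerMap_apply, Matrix.zero_apply, ptraceB,
    Matrix.vecMulVec_apply, Pi.star_apply, Matrix.smul_apply, Matrix.one_apply, smul_eq_mul]
  rw [Fintype.sum_prod_type]
  have hstep : ∀ a : A, (∑ b : B,
      P p (a, b) * ((∑ c, ψ (a, c) * star (ψ (q.1, c))) * ((D:ℂ)⁻¹ * if b = q.2 then 1 else 0)))
      = P p (a, q.2) * ((∑ c, ψ (a, c) * star (ψ (q.1, c))) * (D:ℂ)⁻¹) := by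
    intro a
    rw [Finset.sum_eq_single q.2]
    · simp
    · intro b _ hb; simp [hb]
    · simp
  rw [Finset.sum_congr rfl fun a _ => hstep a]
  have hstep2 : ∀ a : A,
      P p (a, q.2) * ((∑ c, ψ (a, c) * star (ψ (q.1, c))) * (D:ℂ)⁻¹)
      = ∑ c, (star (ψ (q.1, c)) * (D:ℂ)⁻¹) * (P p (a, q.2) * ψ (a, c)) := by
    intro a
    rw [Finset.sum_mul, Finset.mul_sum]
    refine Finset.sum_congr rfl fun c _ => ?_
    ring
  rw [Finset.sum_congr rfl fun a _ => hstep2 a, Finset.sum_comm]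
  refine Finset.sum_eq_zero fun c _ => ?_
  rw [← Finset.mul_sum, key q.2 c p, mul_zero]
end

section
/- Let P be a positive semidefinite operator on a bipartite space H_A ⊗ H_B and σ a positive semidefinite operator on H_A. If P · (σ ⊗ I_B) = 0, then Tr_B[P] · σ = 0. -/
open Kronecker
open scoped ComplexOrder

/-- If P ≥ 0 on H_A ⊗ H_B, σ ≥ 0 on H_A and P (σ ⊗ I) = 0, then Tr_B[P] σ = 0. -/
theorem stmt_7 {A B : Type*} [Fintype A] [Fintype B] [DecidableEq A] [DecidableEq B]
    (P : Matrix (A × B) (A × B) ℂ) (hP : P.PosSemidef)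
    (σ : Matrix A A ℂ) (hσ : σ.PosSemidef)
    (h : P * (σ ⊗ₖ (1 : Matrix B B ℂ)) = 0) :
    ptraceB P * σ = 0 := by
  ext a a'
  have key : ∀ b, (P * (σ ⊗ₖ (1 : Matrix B B ℂ))) (a, b) (a', b) = 0 := by
    intro b; rw [h]; rfl
  simp only [Matrix.mul_apply, Matrix.kroneckerMap_apply, Matrix.one_apply,
    Fintype.sum_prod_type, mul_ite, mul_one, mul_zero, Finset.sum_ite_eq,
    Finset.mem_univ, if_true] at key
  simp only [Matrix.mul_apply, ptraceB, Matrix.zero_apply, Finset.sum_mul]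
  rw [Finset.sum_comm]
  simpa using Finset.sum_congr rfl fun b _ => key b
end

section
/- Let E be a positive linear map on operators of a finite-dimensional Hilbert space such that Tr[E(ρ)] < Tr[ρ] for every nonzero positive semidefinite ρ. Then the spectral radius of E is strictly less than 1. -/
open scoped ComplexOrder
open Matrix

set_option linter.unusedSectionVars false
set_option maxHeartbeats 1000000

attribute [local instance] Matrix.normedAddCommGroup Matrix.normedSpace

section Helpers

variable {n : Type*} [Fintype n] [DecidableEq n]

lemma psd_diag {ρ : Matrix n n ℂ} (hρ : ρ.PosSemidef) (i : n) : 0 ≤ ρ i i := by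
  simpa [← Pi.single_star, single_dotProduct] using hρ.dotProduct_mulVec_nonneg (Pi.single i 1)

lemma psd_diag_re_nonneg {ρ : Matrix n n ℂ} (hρ : ρ.PosSemidef) (i : n) : 0 ≤ (ρ i i).re := by
  have := (Complex.le_def.mp (psd_diag hρ i)).1
  simpa using this

lemma psd_diag_le_trace {ρ : Matrix n n ℂ} (hρ : ρ.PosSemidef) (i : n) :
    (ρ i i).re ≤ ρ.trace.re := by
  rw [Matrix.trace, Complex.re_sum]
  exact Finset.single_le_sum (f := fun k => (ρ k k).re)
    (fun k _ => psd_diag_re_nonneg hρ k) (Finset.mem_univ i)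

lemma psd_trace_re_nonneg {ρ : Matrix n n ℂ} (hρ : ρ.PosSemidef) : 0 ≤ ρ.trace.re := by
  rw [Matrix.trace, Complex.re_sum]
  exact Finset.sum_nonneg fun i _ => psd_diag_re_nonneg hρ i

lemma psd_entry_le {ρ : Matrix n n ℂ} (hρ : ρ.PosSemidef) (i j : n) :
    ‖ρ i j‖ ≤ ρ.trace.re := by
  have htr0 : 0 ≤ ρ.trace.re := psd_trace_re_nonneg hρ
  rcases eq_or_ne i j with rfl | hij
  · have him := (Complex.le_def.mp (psd_diag hρ i)).2
    have : ρ i i = ((ρ i i).re : ℂ) := Complex.ext rfl (by simpa using him.symm)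
    rw [this, Complex.norm_real, Real.norm_eq_abs, abs_of_nonneg (psd_diag_re_nonneg hρ i)]
    exact psd_diag_le_trace hρ i
  · rcases eq_or_ne (ρ i j) 0 with h0 | h0
    · simpa [h0] using htr0
    · set a := ρ i j with ha
      set s := ‖a‖ with hs
      have hs0 : (0:ℝ) < s := by rw [hs]; exact (norm_pos_iff.mpr h0)
      have hsne : (s:ℂ) ≠ 0 := by exact_mod_cast hs0.ne'
      set u : ℂ := -(starRingEnd ℂ) a / s with hu
      set x : n → ℂ := Pi.single i 1 + Pi.single j u with hx
      have hq := hρ.dotProduct_mulVec_nonneg x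
      have hji : ρ j i = (starRingEnd ℂ) a := by
        rw [ha, ← hρ.1.apply i j, RCLike.star_def, Complex.conj_conj]
      have key : (starRingEnd ℂ) a * a = (s:ℂ) * s := by
        rw [mul_comm, Complex.mul_conj]
        norm_cast
        rw [hs, Complex.normSq_eq_norm_sq, pow_two]
      have hus : (starRingEnd ℂ) u * u = 1 := by
        rw [hu, map_div₀, map_neg, Complex.conj_conj, Complex.conj_ofReal]
        field_simp
        linear_combination key
      have hau : a * u = -s := by
        rw [hu]
        field_simp
        linear_combination (-1) * key
      have hqx : star x ⬝ᵥ ρ *ᵥ x = ρ i i + ρ j j - 2 * s := by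
        simp only [hx, star_add, mulVec_add, dotProduct_add, add_dotProduct,
          ← Pi.single_star, single_dotProduct, mulVec_single, star_one, one_mul,
          Pi.single_eq_same, Pi.single_eq_of_ne hij, Pi.single_eq_of_ne hij.symm,
          RCLike.star_def, Pi.smul_apply, op_smul_eq_mul, Matrix.col_apply, mul_one, hji]
        have hcua : (starRingEnd ℂ) u * (starRingEnd ℂ) a = -(s:ℂ) := by
          rw [← _root_.map_mul, mul_comm, hau, _root_.map_neg, Complex.conj_ofReal]
        linear_combination hcua + hau + ρ j j * hus
      rw [hqx] at hq
      have hre := (Complex.le_def.mp hq).1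
      simp only [Complex.zero_re, Complex.sub_re, Complex.add_re, Complex.mul_re,
        Complex.ofReal_re, Complex.ofReal_im, Complex.re_ofNat, Complex.im_ofNat] at hre
      have h1 := psd_diag_le_trace hρ i
      have h2 := psd_diag_le_trace hρ j
      rw [← ha, ← hs] at *
      linarith

lemma psd_trace_im {ρ : Matrix n n ℂ} (hρ : ρ.PosSemidef) : ρ.trace.im = 0 := by
  rw [Matrix.trace, Complex.im_sum]
  exact Finset.sum_eq_zero fun i _ => ((Complex.le_def.mp (psd_diag hρ i)).2).symm

lemma herm_quad_real {H : Matrix n n ℂ} (hH : H.IsHermitian) (x : n → ℂ) :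
    (star x ⬝ᵥ H *ᵥ x).im = 0 := by
  rw [← Complex.conj_eq_iff_im]
  simp only [dotProduct, mulVec, dotProduct, map_sum, _root_.map_mul, Pi.star_apply,
    RCLike.star_def, Complex.conj_conj, Finset.mul_sum]
  rw [Finset.sum_comm]
  refine Finset.sum_congr rfl fun i _ => Finset.sum_congr rfl fun j _ => ?_
  have h1 : (starRingEnd ℂ) (H j i) = H i j := by
    simpa [RCLike.star_def] using hH.apply i j
  rw [h1]; ring

lemma shift_psd {H : Matrix n n ℂ} (hH : H.IsHermitian) :
    (H + (((∑ k, ∑ l, ‖H k l‖) : ℝ) : ℂ) • 1).PosSemidef := by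
  set t : ℝ := ∑ k, ∑ l, ‖H k l‖ with ht
  have hherm : (H + (t : ℂ) • 1).IsHermitian := by
    apply hH.add
    unfold Matrix.IsHermitian
    rw [Matrix.conjTranspose_smul, Matrix.conjTranspose_one, RCLike.star_def,
      Complex.conj_ofReal]
  refine Matrix.PosSemidef.of_dotProduct_mulVec_nonneg hherm fun x => ?_
  set S : ℝ := ∑ m, Complex.normSq (x m) with hS
  have hSnn : 0 ≤ S := Finset.sum_nonneg fun m _ => Complex.normSq_nonneg _
  have hxb : ∀ k l, ‖x k‖ * ‖x l‖ ≤ S := by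
    intro k l
    have h1 : Complex.normSq (x k) ≤ S := Finset.single_le_sum
      (f := fun m => Complex.normSq (x m)) (fun m _ => Complex.normSq_nonneg _)
      (Finset.mem_univ k)
    have h2 : Complex.normSq (x l) ≤ S := Finset.single_le_sum
      (f := fun m => Complex.normSq (x m)) (fun m _ => Complex.normSq_nonneg _)
      (Finset.mem_univ l)
    rw [← Complex.sq_norm] at h1 h2
    nlinarith [sq_nonneg (‖x k‖ - ‖x l‖),
      norm_nonneg (x k), norm_nonneg (x l)]
  have hqb : ‖star x ⬝ᵥ H *ᵥ x‖ ≤ t * S := by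
    simp only [dotProduct, mulVec, dotProduct, Finset.mul_sum]
    calc ‖∑ k, ∑ l, star x k * (H k l * x l)‖
        ≤ ∑ k, ‖∑ l, star x k * (H k l * x l)‖ :=
          norm_sum_le _ _
      _ ≤ ∑ k, ∑ l, ‖star x k * (H k l * x l)‖ :=
          Finset.sum_le_sum fun k _ => norm_sum_le _ _
      _ ≤ ∑ k, ∑ l, ‖H k l‖ * S := by
          refine Finset.sum_le_sum fun k _ => Finset.sum_le_sum fun l _ => ?_
          rw [norm_mul, norm_mul]
          have hstar : ‖star x k‖ = ‖x k‖ := by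
            simp [RCLike.star_def]
          rw [hstar]
          calc ‖x k‖ * (‖H k l‖ * ‖x l‖)
              = ‖H k l‖ * (‖x k‖ * ‖x l‖) := by ring
            _ ≤ ‖H k l‖ * S :=
                mul_le_mul_of_nonneg_left (hxb k l) (norm_nonneg _)
      _ = t * S := by
          rw [ht, Finset.sum_mul]
          exact Finset.sum_congr rfl fun k _ => (Finset.sum_mul _ _ _).symm
  have hxx : star x ⬝ᵥ x = (S : ℂ) := by
    rw [hS]
    push_cast
    simp only [dotProduct, Pi.star_apply, RCLike.star_def]
    exact Finset.sum_congr rfl fun k _ => by rw [mul_comm, Complex.mul_conj]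
  have hexp : star x ⬝ᵥ (H + (t : ℂ) • 1) *ᵥ x = star x ⬝ᵥ H *ᵥ x + ((t * S : ℝ) : ℂ) := by
    rw [Matrix.add_mulVec, dotProduct_add, Matrix.smul_mulVec, Matrix.one_mulVec,
      dotProduct_smul, hxx, smul_eq_mul]
    push_cast
    ring
  have him := herm_quad_real hherm x
  rw [Complex.le_def, hexp]
  constructor
  · simp only [Complex.add_re, Complex.ofReal_re, Complex.zero_re]
    have := abs_le.mp (Complex.abs_re_le_norm (star x ⬝ᵥ H *ᵥ x))
    linarith
  · rw [hexp] at him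
    simp only [Complex.add_im, Complex.ofReal_im, add_zero] at him
    simp [him]

lemma psd_smul_real {ρ : Matrix n n ℂ} (hρ : ρ.PosSemidef) {r : ℝ} (hr : 0 ≤ r) :
    (((r : ℂ)) • ρ).PosSemidef := by
  refine Matrix.PosSemidef.of_dotProduct_mulVec_nonneg ?_ ?_
  · unfold Matrix.IsHermitian
    rw [Matrix.conjTranspose_smul, RCLike.star_def, Complex.conj_ofReal, hρ.1.eq]
  · intro x
    rw [Matrix.smul_mulVec, dotProduct_smul, smul_eq_mul]
    exact mul_nonneg (by exact_mod_cast Complex.zero_le_real.mpr hr) (hρ.dotProduct_mulVec_nonneg x)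

lemma psd_trace_pos {ρ : Matrix n n ℂ} (hρ : ρ.PosSemidef) (hne : ρ ≠ 0) :
    0 < ρ.trace.re := by
  rcases lt_or_eq_of_le (psd_trace_re_nonneg hρ) with h | h
  · exact h
  · exfalso
    apply hne
    ext i j
    have h1 := psd_entry_le hρ i j
    rw [← h] at h1
    have h2 := norm_nonneg (ρ i j)
    have : ‖ρ i j‖ = 0 := le_antisymm h1 h2
    simpa using this

lemma psd_trace_eq_re {ρ : Matrix n n ℂ} (hρ : ρ.PosSemidef) :
    ρ.trace = ((ρ.trace.re : ℝ) : ℂ) :=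
  Complex.ext rfl (by simpa using psd_trace_im hρ)

lemma exists_contraction [Nonempty n] (E : Module.End ℂ (Matrix n n ℂ))
    (hpos : ∀ ρ : Matrix n n ℂ, ρ.PosSemidef → (E ρ).PosSemidef)
    (htr : ∀ ρ : Matrix n n ℂ, ρ.PosSemidef → ρ ≠ 0 → (E ρ).trace.re < ρ.trace.re) :
    ∃ lam : ℝ, 0 ≤ lam ∧ lam < 1 ∧
      ∀ ρ : Matrix n n ℂ, ρ.PosSemidef → (E ρ).trace.re ≤ lam * ρ.trace.re := by
  haveI : ProperSpace (Matrix n n ℂ) := FiniteDimensional.proper ℝ _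
  set S : Set (Matrix n n ℂ) := {ρ | ρ.PosSemidef ∧ ρ.trace = 1} with hSdef
  -- continuity of linear functionals
  have hcont : ∀ (L : Matrix n n ℂ →ₗ[ℝ] ℂ), Continuous L := fun L =>
    L.continuous_of_finiteDimensional
  -- the quadratic entries functional
  have hclosed : IsClosed S := by
    have h1 : IsClosed {ρ : Matrix n n ℂ | ρ.IsHermitian} := by
      have hC : Continuous fun ρ : Matrix n n ℂ => ρᴴ := by
        let L : Matrix n n ℂ →ₗ[ℝ] Matrix n n ℂ :=
          { toFun := fun ρ => ρᴴ
            map_add' := fun a b => Matrix.conjTranspose_add a b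
            map_smul' := fun r a => by
              ext i j
              simp [Matrix.conjTranspose_apply, Complex.real_smul] }
        exact L.continuous_of_finiteDimensional
      exact isClosed_eq hC continuous_id
    have h2 : ∀ x : n → ℂ, IsClosed {ρ : Matrix n n ℂ | 0 ≤ star x ⬝ᵥ ρ *ᵥ x} := by
      intro x
      have hq : Continuous fun ρ : Matrix n n ℂ => star x ⬝ᵥ ρ *ᵥ x := by
        let L : Matrix n n ℂ →ₗ[ℝ] ℂ :=
          { toFun := fun ρ => star x ⬝ᵥ ρ *ᵥ x
            map_add' := fun a b => by rw [Matrix.add_mulVec, dotProduct_add]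
            map_smul' := fun r a => by
              dsimp only [RingHom.id_apply]
              have hra : r • a = ((r : ℂ)) • a := by
                ext i j; simp [Complex.real_smul]
              rw [hra, Matrix.smul_mulVec, dotProduct_smul, smul_eq_mul,
                Complex.real_smul] }
        exact hcont L
      exact isClosed_le continuous_const hq
    have h3 : IsClosed {ρ : Matrix n n ℂ | ρ.trace = 1} := by
      have htc : Continuous fun ρ : Matrix n n ℂ => ρ.trace := by
        let L : Matrix n n ℂ →ₗ[ℝ] ℂ :=
          { toFun := fun ρ => ρ.trace
            map_add' := fun a b => Matrix.trace_add a b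
            map_smul' := fun r a => by
              dsimp only [RingHom.id_apply]
              have hra : r • a = ((r : ℂ)) • a := by
                ext i j; simp [Complex.real_smul]
              rw [hra, Matrix.trace_smul, smul_eq_mul, Complex.real_smul] }
        exact hcont L
      exact isClosed_eq htc continuous_const
    have : S = ({ρ : Matrix n n ℂ | ρ.IsHermitian} ∩
        ⋂ x : n → ℂ, {ρ : Matrix n n ℂ | 0 ≤ star x ⬝ᵥ ρ *ᵥ x}) ∩
        {ρ : Matrix n n ℂ | ρ.trace = 1} := by
      ext ρ
      simp only [hSdef, Set.mem_setOf_eq, Set.mem_inter_iff, Set.mem_iInter,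
          Matrix.posSemidef_iff_dotProduct_mulVec]
    rw [this]
    exact ((h1.inter (isClosed_iInter h2)).inter h3)
  have hsub : S ⊆ Metric.closedBall 0 1 := by
    intro ρ hρ
    rw [Metric.mem_closedBall, dist_zero_right]
    rw [Matrix.norm_le_iff (by norm_num : (0:ℝ) ≤ 1)]
    intro i j
    have := psd_entry_le hρ.1 i j
    rw [hρ.2] at this
    simpa using this
  have hcompact : IsCompact S :=
    (isCompact_closedBall 0 1).of_isClosed_subset hclosed hsub
  have hSne : S.Nonempty := by
    refine ⟨(((Fintype.card n : ℝ)⁻¹ : ℝ) : ℂ) • 1, ?_, ?_⟩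
    · exact psd_smul_real Matrix.PosSemidef.one (by positivity)
    · rw [Matrix.trace_smul, Matrix.trace_one, smul_eq_mul]
      have : (Fintype.card n : ℝ) ≠ 0 := by
        simp [Fintype.card_ne_zero]
      push_cast
      field_simp
  -- the objective function
  have hf : Continuous fun ρ : Matrix n n ℂ => (E ρ).trace.re := by
    have : Continuous fun ρ : Matrix n n ℂ => (E ρ).trace := by
      let L : Matrix n n ℂ →ₗ[ℝ] ℂ :=
        { toFun := fun ρ => (E ρ).trace
          map_add' := fun a b => by rw [_root_.map_add, Matrix.trace_add]
          map_smul' := fun r a => by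
            dsimp only [RingHom.id_apply]
            have hra : r • a = ((r : ℂ)) • a := by
              ext i j; simp [Complex.real_smul]
            rw [hra, _root_.map_smul, Matrix.trace_smul, smul_eq_mul, Complex.real_smul] }
      exact hcont L
    exact Complex.continuous_re.comp this
  obtain ⟨ρ₀, hρ₀S, hmax'⟩ := hcompact.exists_isMaxOn hSne hf.continuousOn
  have hmax : ∀ ρ ∈ S, (E ρ).trace.re ≤ (E ρ₀).trace.re := fun ρ hρ => hmax' hρ
  refine ⟨(E ρ₀).trace.re, psd_trace_re_nonneg (hpos ρ₀ hρ₀S.1), ?_, ?_⟩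
  · have hne : ρ₀ ≠ 0 := by
      intro h
      rw [h] at hρ₀S
      exact one_ne_zero (hρ₀S.2.symm.trans (Matrix.trace_zero n ℂ))
    have := htr ρ₀ hρ₀S.1 hne
    have h1 : ρ₀.trace.re = 1 := by rw [hρ₀S.2]; simp
    linarith
  · intro ρ hρ
    rcases eq_or_ne ρ 0 with rfl | hne
    · simp
    · have hpos' := psd_trace_pos hρ hne
      set r : ℝ := ρ.trace.re with hr
      have hmem : (((r⁻¹ : ℝ)) : ℂ) • ρ ∈ S := by
        constructor
        · exact psd_smul_real hρ (by positivity)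
        · rw [Matrix.trace_smul, smul_eq_mul, psd_trace_eq_re hρ, ← hr]
          rw [← Complex.ofReal_mul]
          rw [inv_mul_cancel₀ hpos'.ne']
          norm_num
      have h2 := hmax _ hmem
      have h3 : (E ((((r⁻¹ : ℝ)) : ℂ) • ρ)).trace.re = r⁻¹ * (E ρ).trace.re := by
        rw [_root_.map_smul E, Matrix.trace_smul, smul_eq_mul]
        simp [Complex.mul_re]
      rw [h3] at h2
      calc (E ρ).trace.re = r * (r⁻¹ * (E ρ).trace.re) := by
            field_simp
        _ ≤ r * ((E ρ₀).trace.re) := by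
            apply mul_le_mul_of_nonneg_left h2 hpos'.le
        _ = (E ρ₀).trace.re * r := mul_comm _ _

end Helpers

lemma combo_le (z1 z2 z3 : ℂ) (sA sB r1 r2 r3 : ℝ) (hsA : 0 ≤ sA) (hsB : 0 ≤ sB)
    (h1 : ‖z1‖ ≤ r1) (h2 : ‖z2‖ ≤ r2) (h3 : ‖z3‖ ≤ r3) :
    ‖(2⁻¹ : ℂ) * z1 - (2⁻¹ : ℂ) * (sA : ℂ) * z3 +
      ((2⁻¹ : ℂ) * Complex.I * z2 - (2⁻¹ : ℂ) * Complex.I * (sB : ℂ) * z3)‖ ≤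
    2⁻¹ * (r1 + sA * r3 + r2 + sB * r3) := by
  have h3' : 0 ≤ r3 := le_trans (norm_nonneg _) h3
  have t1 : ‖(2⁻¹ : ℂ) * z1 - (2⁻¹ : ℂ) * (sA : ℂ) * z3 +
      ((2⁻¹ : ℂ) * Complex.I * z2 - (2⁻¹ : ℂ) * Complex.I * (sB : ℂ) * z3)‖ ≤
      ‖(2⁻¹ : ℂ) * z1‖ + ‖(2⁻¹ : ℂ) * (sA : ℂ) * z3‖
      + ‖(2⁻¹ : ℂ) * Complex.I * z2‖
      + ‖(2⁻¹ : ℂ) * Complex.I * (sB : ℂ) * z3‖ := by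
    calc ‖(2⁻¹ : ℂ) * z1 - (2⁻¹ : ℂ) * (sA : ℂ) * z3 +
        ((2⁻¹ : ℂ) * Complex.I * z2 - (2⁻¹ : ℂ) * Complex.I * (sB : ℂ) * z3)‖
        ≤ ‖(2⁻¹ : ℂ) * z1 - (2⁻¹ : ℂ) * (sA : ℂ) * z3‖
          + ‖(2⁻¹ : ℂ) * Complex.I * z2 - (2⁻¹ : ℂ) * Complex.I * (sB : ℂ) * z3‖ :=
          norm_add_le _ _
      _ ≤ (‖(2⁻¹ : ℂ) * z1‖ + ‖(2⁻¹ : ℂ) * (sA : ℂ) * z3‖)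
          + (‖(2⁻¹ : ℂ) * Complex.I * z2‖ + ‖(2⁻¹ : ℂ) * Complex.I * (sB : ℂ) * z3‖) :=
          add_le_add (norm_sub_le _ _) (norm_sub_le _ _)
      _ = _ := by ring
  have v1 : ‖(2⁻¹ : ℂ) * z1‖ = 2⁻¹ * ‖z1‖ := by
    rw [norm_mul]; norm_num
  have v2 : ‖(2⁻¹ : ℂ) * (sA : ℂ) * z3‖ = 2⁻¹ * sA * ‖z3‖ := by
    rw [norm_mul, norm_mul, Complex.norm_real, Real.norm_eq_abs, abs_of_nonneg hsA]
    norm_num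
  have v3 : ‖(2⁻¹ : ℂ) * Complex.I * z2‖ = 2⁻¹ * ‖z2‖ := by
    rw [norm_mul, norm_mul, Complex.norm_I]; norm_num
  have v4 : ‖(2⁻¹ : ℂ) * Complex.I * (sB : ℂ) * z3‖
      = 2⁻¹ * sB * ‖z3‖ := by
    rw [norm_mul, norm_mul, norm_mul, Complex.norm_I,
      Complex.norm_real, Real.norm_eq_abs, abs_of_nonneg hsB]
    norm_num
  rw [v1, v2, v3, v4] at t1
  have m1 : 2⁻¹ * ‖z1‖ ≤ 2⁻¹ * r1 := by linarith
  have m2 : 2⁻¹ * sA * ‖z3‖ ≤ 2⁻¹ * sA * r3 := by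
    apply mul_le_mul_of_nonneg_left h3; positivity
  have m3 : 2⁻¹ * ‖z2‖ ≤ 2⁻¹ * r2 := by linarith
  have m4 : 2⁻¹ * sB * ‖z3‖ ≤ 2⁻¹ * sB * r3 := by
    apply mul_le_mul_of_nonneg_left h3; positivity
  calc ‖_‖ ≤ _ := t1
    _ ≤ 2⁻¹ * r1 + 2⁻¹ * sA * r3 + 2⁻¹ * r2 + 2⁻¹ * sB * r3 := by linarith
    _ = 2⁻¹ * (r1 + sA * r3 + r2 + sB * r3) := by ring

/-- A positive, strictly trace-decreasing (on nonzero PSD inputs) map on operators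
has spectral radius strictly less than 1: every spectral value has modulus < 1. -/
theorem stmt_16 {n : Type*} [Fintype n] [DecidableEq n]
    (E : Module.End ℂ (Matrix n n ℂ))
    (hpos : ∀ ρ : Matrix n n ℂ, ρ.PosSemidef → (E ρ).PosSemidef)
    (htr : ∀ ρ : Matrix n n ℂ, ρ.PosSemidef → ρ ≠ 0 → (E ρ).trace.re < ρ.trace.re) :
    ∀ c ∈ spectrum ℂ E, ‖c‖ < 1 := by
  intro c hc
  rcases isEmpty_or_nonempty n with hn | hn
  · exfalso
    haveI : Subsingleton (Matrix n n ℂ) :=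
      ⟨fun a b => by ext i j; exact (hn.false i).elim⟩
    exact (spectrum.mem_iff.mp hc) (isUnit_of_subsingleton _)
  -- eigenvector
  have hev : Module.End.HasEigenvalue E c :=
    Module.End.hasEigenvalue_iff_mem_spectrum.mpr hc
  obtain ⟨X, hX⟩ := hev.exists_hasEigenvector
  have hXe : E X = c • X := Module.End.mem_eigenspace_iff.mp hX.1
  have hX0 : X ≠ 0 := hX.2
  obtain ⟨lam, hlam0, hlam1, hlam⟩ := exists_contraction E hpos htr
  -- Hermitian decomposition
  set A : Matrix n n ℂ := X + Xᴴ with hA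
  set B : Matrix n n ℂ := (-Complex.I) • (X - Xᴴ) with hB
  have hAh : A.IsHermitian := by
    unfold Matrix.IsHermitian
    rw [hA, Matrix.conjTranspose_add, Matrix.conjTranspose_conjTranspose, add_comm]
  have hBh : B.IsHermitian := by
    show Bᴴ = B
    rw [hB]
    ext i j
    simp only [Matrix.conjTranspose_apply, Matrix.smul_apply, Matrix.sub_apply,
      smul_eq_mul, star_mul', star_sub, star_neg, Complex.star_def, Complex.conj_I,
      Complex.conj_conj, RingHom.coe_coe]
    ring
  set tA : ℝ := ∑ k, ∑ l, ‖A k l‖ with htA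
  set tB : ℝ := ∑ k, ∑ l, ‖B k l‖ with htB
  have htA0 : 0 ≤ tA := Finset.sum_nonneg fun k _ => Finset.sum_nonneg fun l _ =>
    norm_nonneg _
  have htB0 : 0 ≤ tB := Finset.sum_nonneg fun k _ => Finset.sum_nonneg fun l _ =>
    norm_nonneg _
  set PA : Matrix n n ℂ := A + (tA : ℂ) • 1 with hPA
  set PB : Matrix n n ℂ := B + (tB : ℂ) • 1 with hPB
  have hPAp : PA.PosSemidef := shift_psd hAh
  have hPBp : PB.PosSemidef := shift_psd hBh
  -- X in terms of PSD pieces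
  have hXdec : X = (2⁻¹ : ℂ) • (PA - (tA : ℂ) • 1) +
      ((2⁻¹ : ℂ) * Complex.I) • (PB - (tB : ℂ) • 1) := by
    rw [hPA, hPB, add_sub_cancel_right, add_sub_cancel_right, hA, hB]
    ext i j
    simp only [Matrix.add_apply, Matrix.smul_apply, Matrix.sub_apply, smul_eq_mul,
      Matrix.conjTranspose_apply]
    linear_combination (2⁻¹ * (X i j - star (X j i))) * Complex.I_mul_I
  have hXdec' : X = (2⁻¹ : ℂ) • PA - ((2⁻¹ : ℂ) * (tA : ℂ)) • (1 : Matrix n n ℂ) +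
      (((2⁻¹ : ℂ) * Complex.I) • PB -
        ((2⁻¹ : ℂ) * Complex.I * (tB : ℂ)) • (1 : Matrix n n ℂ)) := by
    rw [hXdec, smul_sub, smul_sub, smul_smul, smul_smul]
  -- powers on the eigenvector
  have hpow : ∀ k : ℕ, (E ^ k) X = (c ^ k) • X := by
    intro k
    induction k with
    | zero => simp
    | succ k ih =>
      rw [pow_succ', Module.End.mul_apply, ih, _root_.map_smul, hXe, smul_smul,
        ← pow_succ]
  -- trace decay of iterates on PSD matrices
  have hdecay : ∀ (k : ℕ) (ρ : Matrix n n ℂ), ρ.PosSemidef →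
      ((E ^ k) ρ).PosSemidef ∧ ((E ^ k) ρ).trace.re ≤ lam ^ k * ρ.trace.re := by
    intro k
    induction k with
    | zero =>
        intro ρ hρ
        constructor
        · simpa using hρ
        · simp
    | succ k ih =>
      intro ρ hρ
      have h1 : (E ^ (k + 1)) ρ = (E ^ k) (E ρ) := by
        rw [pow_succ, Module.End.mul_apply]
      obtain ⟨hp, hb⟩ := ih (E ρ) (hpos ρ hρ)
      refine ⟨h1 ▸ hp, ?_⟩
      rw [h1]
      calc ((E ^ k) (E ρ)).trace.re ≤ lam ^ k * (E ρ).trace.re := hb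
        _ ≤ lam ^ k * (lam * ρ.trace.re) :=
            mul_le_mul_of_nonneg_left (hlam ρ hρ) (pow_nonneg hlam0 k)
        _ = lam ^ (k + 1) * ρ.trace.re := by ring
  -- a nonzero entry of X
  obtain ⟨i, j, hij⟩ : ∃ i j, X i j ≠ 0 := by
    by_contra h
    push_neg at h
    exact hX0 (Matrix.ext fun i j => h i j)
  set tr1 : ℝ := (Matrix.trace (1 : Matrix n n ℂ)).re with htr1
  have htr10 : 0 ≤ tr1 := psd_trace_re_nonneg Matrix.PosSemidef.one
  have hTA0 : 0 ≤ PA.trace.re := psd_trace_re_nonneg hPAp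
  have hTB0 : 0 ≤ PB.trace.re := psd_trace_re_nonneg hPBp
  set C : ℝ := 2⁻¹ * (PA.trace.re + tA * tr1 + PB.trace.re + tB * tr1) with hC
  have hkey : ∀ k : ℕ, ‖c‖ ^ k * ‖X i j‖ ≤ lam ^ k * C := by
    intro k
    obtain ⟨hPAk, hPAkb⟩ := hdecay k PA hPAp
    obtain ⟨hPBk, hPBkb⟩ := hdecay k PB hPBp
    obtain ⟨h1k, h1kb⟩ := hdecay k 1 Matrix.PosSemidef.one
    have e1 : ‖((E ^ k) PA) i j‖ ≤ lam ^ k * PA.trace.re :=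
      (psd_entry_le hPAk i j).trans hPAkb
    have e2 : ‖((E ^ k) PB) i j‖ ≤ lam ^ k * PB.trace.re :=
      (psd_entry_le hPBk i j).trans hPBkb
    have e3 : ‖((E ^ k) (1 : Matrix n n ℂ)) i j‖ ≤ lam ^ k * tr1 :=
      (psd_entry_le h1k i j).trans h1kb
    have h2 : (E ^ k) X = (2⁻¹ : ℂ) • ((E ^ k) PA)
        - ((2⁻¹ : ℂ) * (tA : ℂ)) • ((E ^ k) (1 : Matrix n n ℂ))
        + (((2⁻¹ : ℂ) * Complex.I) • ((E ^ k) PB)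
          - ((2⁻¹ : ℂ) * Complex.I * (tB : ℂ)) • ((E ^ k) (1 : Matrix n n ℂ))) := by
      conv_lhs => rw [hXdec']
      simp only [map_add, map_sub, _root_.map_smul]
    have h3 : ((E ^ k) X) i j = (c ^ k) * X i j := by
      rw [hpow k]; simp
    have hentry : (c ^ k) * X i j = (2⁻¹ : ℂ) * (((E ^ k) PA) i j)
        - (2⁻¹ : ℂ) * (tA : ℂ) * (((E ^ k) (1 : Matrix n n ℂ)) i j)
        + ((2⁻¹ : ℂ) * Complex.I * (((E ^ k) PB) i j)
          - (2⁻¹ : ℂ) * Complex.I * (tB : ℂ) * (((E ^ k) (1 : Matrix n n ℂ)) i j)) := by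
      rw [← h3]
      have := congrArg (fun M : Matrix n n ℂ => M i j) h2
      simpa only [Matrix.sub_apply, Matrix.add_apply, Matrix.smul_apply, smul_eq_mul,
        mul_assoc] using this
    have h4 : ‖(c ^ k) * X i j‖ ≤ lam ^ k * C := by
      rw [hentry]
      have hcomb := combo_le (((E ^ k) PA) i j) (((E ^ k) PB) i j)
        (((E ^ k) (1 : Matrix n n ℂ)) i j) tA tB
        (lam ^ k * PA.trace.re) (lam ^ k * PB.trace.re) (lam ^ k * tr1)
        htA0 htB0 e1 e2 e3
      refine hcomb.trans (le_of_eq ?_)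
      rw [hC]; ring
    calc ‖c‖ ^ k * ‖X i j‖ = ‖(c ^ k) * X i j‖ := by
          rw [norm_mul, norm_pow]
      _ ≤ lam ^ k * C := h4
  -- conclude
  by_contra hge
  push_neg at hge
  have habs0 : 0 < ‖X i j‖ := norm_pos_iff.mpr hij
  have hlim : Filter.Tendsto (fun k : ℕ => lam ^ k * C) Filter.atTop (nhds 0) := by
    have h := tendsto_pow_atTop_nhds_zero_of_lt_one hlam0 hlam1
    simpa using h.mul_const C
  have hle : ‖X i j‖ ≤ 0 := by
    refine ge_of_tendsto' hlim fun k => ?_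
    calc ‖X i j‖ = 1 * ‖X i j‖ := (one_mul _).symm
      _ ≤ ‖c‖ ^ k * ‖X i j‖ :=
          mul_le_mul_of_nonneg_right (one_le_pow₀ hge) (norm_nonneg _)
      _ ≤ lam ^ k * C := hkey k
  linarith
end
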